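/- Abstract interpretation soundness for bottom-up analysis: if U : A → A is monotone on a complete lattice A with concretisation γ : A → Set B monotone, and T_P ∘ γ ≤ γ ∘ U pointwise, then for all i, T_P^i(∅) ⊆ γ(U^i(⊥)), and consequently lfp(T_P) ⊆ γ(lfp(U)) when T_P is continuous. -/
import Mathlib

def TP {B : Type*} (P : Set (Set B × B)) (I : Set B) : Set B :=
  { a | ∃ prem : Set B, (prem, a) ∈ P ∧ prem ⊆ I }

def TPhom {B : Type*} (P : Set (Set B × B)) : Set B →o Set B :=
  ⟨TP P, by
    intro I J h a ha
    obtain ⟨prem, hmem, hsub⟩ := ha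
    exact ⟨prem, hmem, hsub.trans h⟩⟩

/-- Soundness of abstract interpretation for bottom-up analysis: if `U` is a
monotone abstract operator on a complete lattice `A` with monotone
concretisation `γ`, and `TP ∘ γ ≤ γ ∘ U` pointwise, then every concrete
iterate is over-approximated by the corresponding abstract iterate, and
(for a finite-premise, hence continuous, `TP`) `lfp(TP) ⊆ γ(lfp(U))`. -/
theorem abstract_interpretation_sound {B : Type*} (P : Set (Set B × B))
    (hfin : ∀ r ∈ P, (Prod.fst r).Finite)
    {A : Type*} [CompleteLattice A]
    (U : A →o A) (γ : A → Set B) (hγ : Monotone γ)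
    (hsound : ∀ a : A, TP P (γ a) ⊆ γ (U a)) :
    (∀ i : ℕ, (TP P)^[i] ∅ ⊆ γ (U^[i] ⊥)) ∧
      OrderHom.lfp (TPhom P) ⊆ γ (OrderHom.lfp U) := by
  constructor
  · intro i
    induction i with
    | zero => simp
    | succ n ih =>
      rw [Function.iterate_succ_apply', Function.iterate_succ_apply']
      exact fun a ha => hsound _ ((TPhom P).mono ih ha)
  · apply OrderHom.lfp_le
    calc TP P (γ (OrderHom.lfp U)) ⊆ γ (U (OrderHom.lfp U)) := hsound _
      _ = γ (OrderHom.lfp U) := by rw [OrderHom.map_lfp]
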